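/- Let H = Σ_{α∈S} s_α P_α be an n-qubit traceless Hamiltonian with |S| = m and |s_α| ≤ S, let t > 0, R = (1/m)Σ_{k≥2} (mtS)^k/k!, and let v be the Pauli coefficient vector of e^{-iHt}. Then for any set X of non-identity Pauli matrices with |X| ≥ m: ||v[X]||_2^2 ≤ Σ_{β ∈ S∩X} (|s_β| t + R)^2 + (m − |S∩X|) R^2. -/

import Mathlib

open scoped BigOperators

attribute [local instance] Classical.propDecidable

/-- The four single-qubit Pauli matrices `I, X, Y, Z`. -/
noncomputable def pauliOne : Fin 4 → Matrix (Fin 2) (Fin 2) ℂ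
  | 0 => 1
  | 1 => !![0, 1; 1, 0]
  | 2 => !![0, -Complex.I; Complex.I, 0]
  | 3 => !![1, 0; 0, -1]

/-- The `n`-qubit Pauli matrix indexed by `α : Fin n → Fin 4`, given as the
tensor product of the single-qubit Paulis `pauliOne (α i)`. -/
noncomputable def Pauli (n : ℕ) (α : Fin n → Fin 4) :
    Matrix (Fin n → Fin 2) (Fin n → Fin 2) ℂ :=
  Matrix.of fun x y => ∏ i, pauliOne (α i) (x i) (y i)

/-! ### Auxiliary material: the Pauli group structure -/

/-- Klein four-group operation on single-qubit Pauli labels. -/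
def x4 : Fin 4 → Fin 4 → Fin 4
  | 0, 0 => 0
  | 0, 1 => 1
  | 0, 2 => 2
  | 0, 3 => 3
  | 1, 0 => 1
  | 1, 1 => 0
  | 1, 2 => 3
  | 1, 3 => 2
  | 2, 0 => 2
  | 2, 1 => 3
  | 2, 2 => 0
  | 2, 3 => 1
  | 3, 0 => 3
  | 3, 1 => 2
  | 3, 2 => 1
  | 3, 3 => 0

/-- Phase occurring in the product of two single-qubit Paulis. -/
noncomputable def ph : Fin 4 → Fin 4 → ℂ
  | 0, 0 => 1
  | 0, 1 => 1
  | 0, 2 => 1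
  | 0, 3 => 1
  | 1, 0 => 1
  | 1, 1 => 1
  | 1, 2 => Complex.I
  | 1, 3 => -Complex.I
  | 2, 0 => 1
  | 2, 1 => -Complex.I
  | 2, 2 => 1
  | 2, 3 => Complex.I
  | 3, 0 => 1
  | 3, 1 => Complex.I
  | 3, 2 => -Complex.I
  | 3, 3 => 1

lemma x4_self : ∀ a, x4 a a = 0 := by decide
lemma x4_cancel : ∀ a b, x4 (x4 a b) b = a := by decide
lemma x4_eq_zero : ∀ a b, (x4 a b = 0 ↔ a = b) := by decide

lemma ph_self : ∀ a, ph a a = 1 := by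
  intro a; fin_cases a <;> rfl

lemma abs_ph : ∀ a b, ‖ph a b‖ = 1 := by
  intro a b; fin_cases a <;> fin_cases b <;> simp [ph]

lemma pauliOne_mul : ∀ a b, pauliOne a * pauliOne b = ph a b • pauliOne (x4 a b) := by
  intro a b
  fin_cases a <;> fin_cases b <;>
    · ext i j
      fin_cases i <;> fin_cases j <;>
        simp [pauliOne, ph, x4, Matrix.mul_apply, Fin.sum_univ_two, Matrix.one_apply]

lemma pauliOne_trace : ∀ a, (pauliOne a).trace = if a = 0 then 2 else 0 := by
  intro a
  fin_cases a <;> simp [pauliOne, Matrix.trace, Matrix.diag, Fin.sum_univ_two]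

/-- Pointwise Klein operation on multi-qubit Pauli labels. -/
def pxor {n : ℕ} (α β : Fin n → Fin 4) : Fin n → Fin 4 := fun i => x4 (α i) (β i)

lemma pxor_invol {n : ℕ} (α : Fin n → Fin 4) : Function.Involutive (fun γ => pxor γ α) :=
  fun γ => funext fun i => x4_cancel (γ i) (α i)

lemma Pauli_mul {n : ℕ} (α β : Fin n → Fin 4) :
    Pauli n α * Pauli n β = (∏ i, ph (α i) (β i)) • Pauli n (pxor α β) := by
  ext x y
  simp only [Matrix.mul_apply, Pauli, Matrix.of_apply, Matrix.smul_apply, smul_eq_mul]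
  have h1 : ∀ z : Fin n → Fin 2,
      (∏ i, pauliOne (α i) (x i) (z i)) * ∏ i, pauliOne (β i) (z i) (y i)
      = ∏ i, (pauliOne (α i) (x i) (z i) * pauliOne (β i) (z i) (y i)) := fun z =>
    (Finset.prod_mul_distrib).symm
  rw [Finset.sum_congr rfl fun z _ => h1 z, ← Fintype.prod_sum fun i w =>
    pauliOne (α i) (x i) w * pauliOne (β i) w (y i)]
  have h2 : ∀ i : Fin n, (∑ w, pauliOne (α i) (x i) w * pauliOne (β i) w (y i))
      = ph (α i) (β i) * pauliOne (pxor α β i) (x i) (y i) := by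
    intro i
    have := congrArg (fun M => M (x i) (y i)) (pauliOne_mul (α i) (β i))
    simpa [Matrix.mul_apply, pxor] using this
  rw [Finset.prod_congr rfl fun i _ => h2 i, Finset.prod_mul_distrib]

lemma Pauli_trace {n : ℕ} (α : Fin n → Fin 4) :
    (Pauli n α).trace = if α = (fun _ => 0) then (2:ℂ) ^ n else 0 := by
  have : (Pauli n α).trace = ∏ i, (pauliOne (α i)).trace := by
    simp only [Matrix.trace, Matrix.diag, Pauli, Matrix.of_apply]
    exact (Fintype.prod_sum fun i w => pauliOne (α i) w w).symm
  rw [this]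
  by_cases h : α = (fun _ => 0)
  · simp [h, pauliOne_trace]
  · rw [if_neg h]
    obtain ⟨i, hi⟩ : ∃ i, α i ≠ 0 := by
      by_contra hc
      push_neg at hc
      exact h (funext hc)
    exact Finset.prod_eq_zero (Finset.mem_univ i) (by simp [pauliOne_trace, hi])

lemma trace_Pauli_mul {n : ℕ} (γ β : Fin n → Fin 4) :
    (Pauli n γ * Pauli n β).trace = if γ = β then (2:ℂ) ^ n else 0 := by
  rw [Pauli_mul, Matrix.trace_smul, Pauli_trace, smul_eq_mul]
  by_cases h : γ = β
  · subst h
    have h0 : pxor γ γ = fun _ => 0 := funext fun i => (x4_eq_zero _ _).2 rfl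
    simp [h0, ph_self]
  · have : pxor γ β ≠ (fun _ => 0) := by
      intro hc
      apply h
      funext i
      exact (x4_eq_zero (γ i) (β i)).1 (congrFun hc i)
    simp [h, this]

lemma Pauli_zero {n : ℕ} : Pauli n (fun _ => 0) = 1 := by
  ext x y
  simp only [Pauli, Matrix.of_apply, pauliOne, Matrix.one_apply]
  by_cases h : x = y
  · simp [h]
  · rw [if_neg h]
    obtain ⟨i, hi⟩ : ∃ i, x i ≠ y i := by
      by_contra hc
      push_neg at hc
      exact h (funext hc)
    exact Finset.prod_eq_zero (Finset.mem_univ i) (by simp [hi])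

/-! ### Counting Pauli words -/

/-- `Nk S k β` counts words `(α_1,…,α_k) ∈ S^k` whose Klein-sum is `β`. -/
noncomputable def Nk {n : ℕ} (S : Finset (Fin n → Fin 4)) : ℕ → (Fin n → Fin 4) → ℕ
  | 0, β => if β = (fun _ => 0) then 1 else 0
  | (k+1), γ => ∑ α ∈ S, Nk S k (pxor γ α)

lemma Nk_sum {n : ℕ} (S : Finset (Fin n → Fin 4)) :
    ∀ k, ∑ β : Fin n → Fin 4, Nk S k β = S.card ^ k := by
  intro k
  induction k with
  | zero => simp [Nk]
  | succ k ih =>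
    rw [pow_succ]
    calc ∑ β : Fin n → Fin 4, Nk S (k+1) β
        = ∑ α ∈ S, ∑ β : Fin n → Fin 4, Nk S k (pxor β α) := by
          rw [Finset.sum_comm]; rfl
      _ = ∑ α ∈ S, S.card ^ k := by
          refine Finset.sum_congr rfl fun α _ => ?_
          rw [← ih]
          exact Fintype.sum_equiv ((pxor_invol α).toPerm _) _ _ (fun β => rfl)
      _ = S.card ^ k * S.card := by simp [mul_comm]

lemma Nk_le_all {n : ℕ} (S : Finset (Fin n → Fin 4)) : ∀ k β, Nk S k β ≤ S.card ^ k := by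
  intro k β
  calc Nk S k β ≤ ∑ γ : Fin n → Fin 4, Nk S k γ :=
        Finset.single_le_sum (fun γ _ => Nat.zero_le _) (Finset.mem_univ β)
    _ = S.card ^ k := Nk_sum S k

lemma Nk_le {n : ℕ} (S : Finset (Fin n → Fin 4)) : ∀ k β, Nk S (k+1) β ≤ S.card ^ k := by
  intro k
  induction k with
  | zero =>
    intro β
    have : Nk S 1 β = ∑ α ∈ S, if pxor β α = (fun _ => 0) then 1 else 0 := rfl
    rw [this]
    calc (∑ α ∈ S, if pxor β α = (fun _ => 0) then 1 else 0)
        ≤ ∑ α ∈ S.filter (fun α => pxor β α = (fun _ => 0)), 1 := by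
          rw [Finset.sum_filter]
    _ ≤ 1 := by
        rw [Finset.sum_const, smul_eq_mul, mul_one]
        refine Finset.card_le_one.2 (fun a ha b hb => ?_)
        rw [Finset.mem_filter] at ha hb
        have ea : β = a := funext fun i => (x4_eq_zero _ _).1 (congrFun ha.2 i)
        have eb : β = b := funext fun i => (x4_eq_zero _ _).1 (congrFun hb.2 i)
        rw [← ea, ← eb]
    _ = S.card ^ 0 := by simp
  | succ k ih =>
    intro β
    show (∑ α ∈ S, Nk S (k+1) (pxor β α)) ≤ S.card ^ (k+1)
    calc (∑ α ∈ S, Nk S (k+1) (pxor β α)) ≤ ∑ _α ∈ S, S.card ^ k :=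
          Finset.sum_le_sum fun α _ => ih _
      _ = S.card ^ (k+1) := by rw [Finset.sum_const, smul_eq_mul, pow_succ, mul_comm]

/-! ### Expanding powers of the Hamiltonian in the Pauli basis -/

lemma trace_sum_smul {n : ℕ} (c : (Fin n → Fin 4) → ℂ) (β : Fin n → Fin 4) :
    ((∑ γ : Fin n → Fin 4, c γ • Pauli n γ) * Pauli n β).trace = c β * 2 ^ n := by
  rw [Finset.sum_mul, Matrix.trace_sum]
  have : ∀ γ : Fin n → Fin 4, ((c γ • Pauli n γ) * Pauli n β).trace
      = c γ * if γ = β then (2:ℂ)^n else 0 := by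
    intro γ
    rw [Matrix.smul_mul, Matrix.trace_smul, trace_Pauli_mul, smul_eq_mul]
  rw [Finset.sum_congr rfl fun γ _ => this γ]
  simp [Finset.sum_ite_eq']

lemma Hpow_coeff {n : ℕ} (S : Finset (Fin n → Fin 4)) (s : (Fin n → Fin 4) → ℂ) (Sbd : ℝ)
    (hbd : ∀ α ∈ S, ‖s α‖ ≤ Sbd) (hSbd : 0 ≤ Sbd) :
    ∀ k : ℕ, ∃ c : (Fin n → Fin 4) → ℂ,
      (∑ α ∈ S, s α • Pauli n α) ^ k = ∑ β : Fin n → Fin 4, c β • Pauli n β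
      ∧ ∀ β, ‖c β‖ ≤ Sbd ^ k * Nk S k β := by
  intro k
  induction k with
  | zero =>
    refine ⟨fun β => if β = (fun _ => 0) then 1 else 0, ?_, ?_⟩
    · rw [pow_zero]
      rw [Finset.sum_eq_single (fun _ => (0 : Fin 4))]
      · simp [Pauli_zero]
      · intro β _ hβ; simp [hβ]
      · intro h; exact absurd (Finset.mem_univ _) h
    · intro β
      by_cases h : β = (fun _ => 0) <;> simp [h, Nk]
  | succ k ih =>
    obtain ⟨c, hc, hcb⟩ := ih
    refine ⟨fun γ => ∑ α ∈ S, c (pxor γ α) * s α * ∏ i, ph (pxor γ α i) (α i), ?_, ?_⟩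
    · rw [pow_succ, hc, Finset.sum_mul]
      have key : ∀ β : Fin n → Fin 4, (c β • Pauli n β) * (∑ α ∈ S, s α • Pauli n α)
          = ∑ α ∈ S, (c β * s α * ∏ i, ph (β i) (α i)) • Pauli n (pxor β α) := by
        intro β
        rw [Finset.mul_sum]
        refine Finset.sum_congr rfl fun α _ => ?_
        rw [Matrix.smul_mul, Matrix.mul_smul, Pauli_mul, smul_smul, smul_smul]
        try ring_nf
      rw [Finset.sum_congr rfl fun β _ => key β, Finset.sum_comm]
      have hrhs : (∑ β : Fin n → Fin 4,
            (fun γ => ∑ α ∈ S, c (pxor γ α) * s α * ∏ i, ph (pxor γ α i) (α i)) β • Pauli n β)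
          = ∑ α ∈ S, ∑ β : Fin n → Fin 4,
              (c (pxor β α) * s α * ∏ i, ph (pxor β α i) (α i)) • Pauli n β := by
        simp only [Finset.sum_smul]
        exact Finset.sum_comm
      rw [hrhs]
      refine Finset.sum_congr rfl fun α hα => ?_
      refine (Fintype.sum_equiv ((pxor_invol α).toPerm _) _ _ (fun β => ?_)).symm
      have h2 : pxor (pxor β α) α = β := pxor_invol α β
      simp only [Function.Involutive.toPerm, Equiv.coe_fn_mk, h2]
    · intro β
      have step : ∀ α ∈ S, ‖c (pxor β α) * s α * ∏ i, ph (pxor β α i) (α i)‖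
          ≤ Sbd ^ k * (Nk S k (pxor β α) : ℝ) * Sbd := by
        intro α hα
        have h1 : ‖c (pxor β α) * s α * ∏ i, ph (pxor β α i) (α i)‖
            = ‖c (pxor β α)‖ * ‖s α‖ := by
          rw [norm_mul, norm_mul, norm_prod]
          simp [abs_ph]
        rw [h1]
        exact mul_le_mul (hcb _) (hbd α hα) (norm_nonneg _) (by positivity)
      calc ‖∑ α ∈ S, c (pxor β α) * s α * ∏ i, ph (pxor β α i) (α i)‖
          ≤ ∑ α ∈ S, ‖c (pxor β α) * s α * ∏ i, ph (pxor β α i) (α i)‖ :=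
            norm_sum_le _ _
        _ ≤ ∑ α ∈ S, Sbd ^ k * (Nk S k (pxor β α) : ℝ) * Sbd := Finset.sum_le_sum step
        _ = Sbd ^ (k+1) * Nk S (k+1) β := by
            have hcast : ((Nk S (k+1) β : ℕ) : ℝ) = ∑ α ∈ S, (Nk S k (pxor β α) : ℝ) := by
              show ((∑ α ∈ S, Nk S k (pxor β α) : ℕ) : ℝ) = _
              push_cast
              rfl
            rw [hcast, Finset.mul_sum]
            exact Finset.sum_congr rfl fun α _ => by ring

/-! ### Analytic input -/

lemma hasSum_trace_exp {N : Type*} [Fintype N] [DecidableEq N] (A P : Matrix N N ℂ) :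
    HasSum (fun k : ℕ => ((k.factorial : ℂ)⁻¹) • ((A ^ k * P).trace))
      ((NormedSpace.exp A * P).trace) := by
  letI : SeminormedRing (Matrix N N ℂ) := Matrix.linftyOpSemiNormedRing
  letI : NormedRing (Matrix N N ℂ) := Matrix.linftyOpNormedRing
  letI : NormedAlgebra ℂ (Matrix N N ℂ) := Matrix.linftyOpNormedAlgebra
  have hA := NormedSpace.exp_series_hasSum_exp' (𝕂 := ℂ) A
  let L : Matrix N N ℂ →L[ℂ] ℂ := LinearMap.toContinuousLinearMap
    ((Matrix.traceLinearMap N ℂ ℂ).comp (LinearMap.mulRight ℂ P))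
  have h2 := hA.mapL L
  have hL : ∀ B : Matrix N N ℂ, L B = (B * P).trace := fun B => rfl
  have h3 : ∀ k : ℕ, L (((k.factorial : ℂ)⁻¹) • A ^ k)
      = ((k.factorial : ℂ)⁻¹) • ((A ^ k * P).trace) := by
    intro k
    rw [map_smul, hL]
  rw [funext h3] at h2
  rwa [hL] at h2

/-! ### The concentration step -/

lemma final_alg {ι : Type*} (X S' : Finset ι) (hS'X : S' ⊆ X) (a r : ι → ℝ) (R m : ℝ)
    (ha : ∀ β ∈ S', 0 ≤ a β) (hr0 : ∀ β ∈ X, 0 ≤ r β) (hrR : ∀ β ∈ X, r β ≤ R)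
    (hR : 0 ≤ R) (haz : ∀ β ∈ X, β ∉ S' → a β = 0)
    (hsum : ∑ β ∈ X, r β ≤ m * R) :
    ∑ β ∈ X, (a β + r β) ^ 2 ≤ ∑ β ∈ S', (a β + R) ^ 2 + (m - S'.card) * R ^ 2 := by
  have hsplit : ∑ β ∈ X \ S', (a β + r β) ^ 2 + ∑ β ∈ S', (a β + r β) ^ 2
      = ∑ β ∈ X, (a β + r β) ^ 2 := Finset.sum_sdiff hS'X
  have h2 : ∑ β ∈ S', (a β + r β) ^ 2
      ≤ ∑ β ∈ S', (a β + R) ^ 2 - S'.card * R ^ 2 + R * ∑ β ∈ S', r β := by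
    have : ∑ β ∈ S', (a β + r β) ^ 2 ≤ ∑ β ∈ S', ((a β + R) ^ 2 - R ^ 2 + R * r β) := by
      refine Finset.sum_le_sum fun β hβ => ?_
      have h1 := ha β hβ
      have h2 := hr0 β (hS'X hβ)
      have h3 := hrR β (hS'X hβ)
      nlinarith
    refine this.trans (le_of_eq ?_)
    rw [Finset.sum_add_distrib, Finset.sum_sub_distrib, Finset.sum_const, ← Finset.mul_sum]
    push_cast
    ring
  have h3 : ∑ β ∈ X \ S', (a β + r β) ^ 2 ≤ R * ∑ β ∈ X \ S', r β := by
    rw [Finset.mul_sum]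
    refine Finset.sum_le_sum fun β hβ => ?_
    have hb1 := Finset.mem_sdiff.1 hβ
    rw [haz β hb1.1 hb1.2, zero_add]
    have := hr0 β hb1.1
    have := hrR β hb1.1
    nlinarith
  have h4 : ∑ β ∈ X \ S', r β + ∑ β ∈ S', r β = ∑ β ∈ X, r β := Finset.sum_sdiff hS'X
  have h5 : R * ∑ β ∈ X, r β ≤ R * (m * R) := mul_le_mul_of_nonneg_left hsum hR
  have h6 : R * (m * R) = m * R ^ 2 := by ring
  nlinarith [hsplit, h2, h3, h4, h5, h6]

set_option maxHeartbeats 1000000 in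
/-- ℓ₂-norm upper bound for the Pauli coefficient vector of the evolution operator:
for a traceless `H = ∑_{α∈S} s_α P_α` with `m = |S|` nonzero Pauli terms, `|s_α| ≤ S`,
`t > 0`, `R = (1/m) ∑_{k≥2} (mtS)^k/k!`, and `v` the Pauli coefficient vector of
`e^{-iHt}`, for any set `X` of non-identity Pauli matrices with `|X| ≥ m` one has
`‖v[X]‖₂² ≤ ∑_{β ∈ S∩X} (|s_β| t + R)² + (m − |S∩X|) R²`. -/
theorem stmt17 (n m : ℕ) (S : Finset (Fin n → Fin 4)) (hScard : S.card = m)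
    (hSid : (fun _ => (0 : Fin 4)) ∉ S)
    (s : (Fin n → Fin 4) → ℂ) (Sbd : ℝ) (hbd : ∀ α ∈ S, ‖s α‖ ≤ Sbd)
    (t : ℝ) (ht : 0 < t)
    (H : Matrix (Fin n → Fin 2) (Fin n → Fin 2) ℂ)
    (hH : H = ∑ α ∈ S, s α • Pauli n α)
    (R : ℝ)
    (hR : R = (1 / m) * ∑' k : ℕ, (m * t * Sbd) ^ (k + 2) / (k + 2).factorial)
    (v : (Fin n → Fin 4) → ℂ)
    (hv : ∀ α, v α =
      (NormedSpace.exp ((-(Complex.I * (t : ℂ))) • H) * Pauli n α).trace / 2 ^ n)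
    (X : Finset (Fin n → Fin 4)) (hXid : (fun _ => (0 : Fin 4)) ∉ X)
    (hX : m ≤ X.card) :
    ∑ α ∈ X, Complex.normSq (v α)
      ≤ (∑ α ∈ S ∩ X, (‖s α‖ * t + R) ^ 2)
        + ((m : ℝ) - (S ∩ X).card) * R ^ 2 := by
  have h2n : ((2:ℂ) ^ n) ≠ 0 := pow_ne_zero n two_ne_zero
  set z : ℂ := -(Complex.I * (t : ℂ)) with hz
  -- degenerate case `m = 0`
  rcases Nat.eq_zero_or_pos m with hm0 | hmpos
  · subst hm0
    have hS : S = ∅ := Finset.card_eq_zero.1 hScard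
    have hvz : ∀ β ∈ X, v β = 0 := by
      intro β hβ
      have hβ0 : β ≠ (fun _ => 0) := fun hc => hXid (hc ▸ hβ)
      have hH0 : H = 0 := by rw [hH, hS, Finset.sum_empty]
      rw [hv β, hH0, smul_zero, NormedSpace.exp_zero, one_mul, Pauli_trace, if_neg hβ0,
        zero_div]
    have hL : ∑ α ∈ X, Complex.normSq (v α) = 0 :=
      Finset.sum_eq_zero fun β hβ => by rw [hvz β hβ, Complex.normSq_zero]
    have hSX : S ∩ X = ∅ := by rw [hS]; exact Finset.empty_inter X
    rw [hL, hSX]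
    simp
  -- main case
  have hmne : (m:ℝ) ≠ 0 := Nat.cast_ne_zero.2 hmpos.ne'
  have hSbd : 0 ≤ Sbd := by
    obtain ⟨α, hα⟩ := Finset.card_pos.1 (hScard ▸ hmpos)
    exact (norm_nonneg _).trans (hbd α hα)
  have habs_z : ‖z‖ = t := by
    rw [hz]
    rw [show ‖-(Complex.I * (t:ℂ))‖ = ‖Complex.I * (t:ℂ)‖ from
      norm_neg _]
    rw [norm_mul, Complex.norm_I, one_mul, Complex.norm_real, Real.norm_eq_abs, abs_of_pos ht]
  -- the coefficient series
  set f : ℕ → (Fin n → Fin 4) → ℂ :=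
    fun k β => ((k.factorial : ℂ)⁻¹ * z ^ k) * ((H ^ k * Pauli n β).trace / 2 ^ n) with hf
  have hvsum : ∀ β, HasSum (fun k => f k β) (v β) := by
    intro β
    have h1 := (hasSum_trace_exp (z • H) (Pauli n β)).div_const ((2:ℂ) ^ n)
    have h2 : (fun k : ℕ => ((k.factorial : ℂ)⁻¹) • (((z • H) ^ k * Pauli n β).trace) / 2 ^ n)
        = fun k => f k β := by
      funext k
      rw [hf, smul_pow, Matrix.smul_mul, Matrix.trace_smul, smul_eq_mul, smul_eq_mul]
      ring
    rw [h2] at h1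
    rw [hv β]
    exact h1
  -- bounds on the coefficients
  have habs : ∀ (k : ℕ) β, ‖(H ^ k * Pauli n β).trace / 2 ^ n‖
      ≤ Sbd ^ k * Nk S k β := by
    intro k β
    obtain ⟨c, hc, hcb⟩ := Hpow_coeff S s Sbd hbd hSbd k
    rw [hH, hc, trace_sum_smul, mul_div_assoc, div_self h2n, mul_one]
    exact hcb β
  have hf_abs : ∀ (k : ℕ) β,
      ‖f k β‖ ≤ t ^ k * Sbd ^ k * Nk S k β / k.factorial := by
    intro k β
    calc ‖f k β‖
        = (k.factorial : ℝ)⁻¹ * t ^ k * ‖(H ^ k * Pauli n β).trace / 2 ^ n‖ := by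
          rw [hf, norm_mul, norm_mul, norm_inv, norm_pow, habs_z, Complex.norm_natCast]
      _ ≤ (k.factorial : ℝ)⁻¹ * t ^ k * (Sbd ^ k * Nk S k β) := by
          refine mul_le_mul_of_nonneg_left (habs k β) ?_
          positivity
      _ = t ^ k * Sbd ^ k * Nk S k β / k.factorial := by
          rw [div_eq_inv_mul]; ring
  have hfG : ∀ (k : ℕ) β, ‖f k β‖ ≤ ((m:ℝ) * t * Sbd) ^ k / k.factorial := by
    intro k β
    refine (hf_abs k β).trans ?_
    have hNk : (Nk S k β : ℝ) ≤ (m : ℝ) ^ k := by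
      have h := Nk_le_all S k β
      rw [hScard] at h
      calc (Nk S k β : ℝ) ≤ ((m ^ k : ℕ) : ℝ) := Nat.cast_le.2 h
        _ = (m : ℝ) ^ k := by push_cast; ring
    have hpow : ((m:ℝ) * t * Sbd) ^ k = t ^ k * Sbd ^ k * (m:ℝ) ^ k := by
      rw [show ((m:ℝ) * t * Sbd) = t * Sbd * m from by ring, mul_pow, mul_pow]
    rw [hpow]
    gcongr
  have hsumf : ∀ β, Summable fun k => ‖f k β‖ := by
    intro β
    exact Summable.of_nonneg_of_le (fun k => norm_nonneg _) (fun k => hfG k β)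
      (Real.summable_pow_div_factorial _)
  set r : (Fin n → Fin 4) → ℝ := fun β => ∑' j : ℕ, ‖f (j+2) β‖ with hrdef
  have hrsummable : ∀ β, Summable fun j : ℕ => ‖f (j+2) β‖ :=
    fun β => (summable_nat_add_iff 2).2 (hsumf β)
  have hGsummable : Summable fun j : ℕ => ((m:ℝ) * t * Sbd) ^ (j+2) / (j+2).factorial :=
    (summable_nat_add_iff 2).2 (Real.summable_pow_div_factorial _)
  -- tail bounds
  have htail : ∀ (j : ℕ) β, ‖f (j+2) β‖
      ≤ (t * Sbd) ^ (j+2) * (m:ℝ) ^ (j+1) / (j+2).factorial := by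
    intro j β
    refine (hf_abs (j+2) β).trans ?_
    have hNk : (Nk S (j+2) β : ℝ) ≤ (m:ℝ) ^ (j+1) := by
      have h := Nk_le S (j+1) β
      rw [hScard] at h
      calc (Nk S (j+2) β : ℝ) ≤ ((m ^ (j+1) : ℕ) : ℝ) := Nat.cast_le.2 h
        _ = (m : ℝ) ^ (j+1) := by push_cast; ring
    rw [mul_pow]
    gcongr
  have hterm_eq : ∀ j : ℕ, (t * Sbd) ^ (j+2) * (m:ℝ) ^ (j+1) / (j+2).factorial
      = (1/(m:ℝ)) * (((m:ℝ) * t * Sbd) ^ (j+2) / (j+2).factorial) := by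
    intro j
    have h1 : ((m:ℝ) * t * Sbd) ^ (j+2) = (m:ℝ) ^ (j+2) * (t * Sbd) ^ (j+2) := by
      rw [show ((m:ℝ) * t * Sbd) = m * (t * Sbd) from by ring, mul_pow]
    have h2 : (m:ℝ) ^ (j+2) = m * (m:ℝ) ^ (j+1) := by ring
    rw [h1, h2]
    field_simp
  have hRalt : R = ∑' j : ℕ, (t * Sbd) ^ (j+2) * (m:ℝ) ^ (j+1) / (j+2).factorial := by
    rw [hR, ← tsum_mul_left]
    exact tsum_congr fun j => (hterm_eq j).symm
  have hR0 : 0 ≤ R := by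
    rw [hRalt]
    exact tsum_nonneg fun j => by positivity
  have hrR : ∀ β, r β ≤ R := by
    intro β
    rw [hRalt, hrdef]
    refine Summable.tsum_le_tsum (fun j => htail j β) (hrsummable β) ?_
    exact Summable.congr (hGsummable.mul_left (1/(m:ℝ))) fun j => (hterm_eq j).symm
  have hr0 : ∀ β, 0 ≤ r β := fun β => tsum_nonneg fun j => norm_nonneg _
  -- ℓ¹ bound on the tail over X
  have hXsum : ∑ β ∈ X, r β ≤ m * R := by
    have hhs : HasSum (fun j : ℕ => ∑ β ∈ X, ‖f (j+2) β‖) (∑ β ∈ X, r β) :=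
      hasSum_sum fun β _ => (hrsummable β).hasSum
    have hmR : (m:ℝ) * R = ∑' j : ℕ, ((m:ℝ) * t * Sbd) ^ (j+2) / (j+2).factorial := by
      rw [hR, ← mul_assoc, mul_one_div, div_self hmne, one_mul]
    rw [← hhs.tsum_eq, hmR]
    refine Summable.tsum_le_tsum ?_ hhs.summable hGsummable
    intro j
    have hNsum : ∑ β ∈ X, (Nk S (j+2) β : ℝ) ≤ (m:ℝ) ^ (j+2) := by
      calc ∑ β ∈ X, (Nk S (j+2) β : ℝ) ≤ ∑ β : Fin n → Fin 4, (Nk S (j+2) β : ℝ) :=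
            Finset.sum_le_sum_of_subset_of_nonneg (Finset.subset_univ X)
              (fun _ _ _ => Nat.cast_nonneg _)
        _ = ((S.card ^ (j+2) : ℕ) : ℝ) := by rw [← Nk_sum S (j+2)]; push_cast; rfl
        _ = (m:ℝ) ^ (j+2) := by rw [hScard]; push_cast; ring
    calc ∑ β ∈ X, ‖f (j+2) β‖
        ≤ ∑ β ∈ X, t ^ (j+2) * Sbd ^ (j+2) * (Nk S (j+2) β : ℝ) / (j+2).factorial :=
          Finset.sum_le_sum fun β _ => hf_abs (j+2) β
      _ = (t ^ (j+2) * Sbd ^ (j+2) / (j+2).factorial) * ∑ β ∈ X, (Nk S (j+2) β : ℝ) := by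
          rw [Finset.mul_sum]
          exact Finset.sum_congr rfl fun β _ => by ring
      _ ≤ (t ^ (j+2) * Sbd ^ (j+2) / (j+2).factorial) * (m:ℝ) ^ (j+2) := by
          refine mul_le_mul_of_nonneg_left hNsum (by positivity)
      _ = ((m:ℝ) * t * Sbd) ^ (j+2) / (j+2).factorial := by
          rw [mul_pow, mul_pow]
          ring
  -- the first two terms of the series
  set a : (Fin n → Fin 4) → ℝ :=
    fun β => if β ∈ S then ‖s β‖ * t else 0 with hadef
  have hf0 : ∀ β ∈ X, f 0 β = 0 := by
    intro β hβ
    have hβ0 : β ≠ (fun _ => 0) := fun hc => hXid (hc ▸ hβ)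
    rw [hf]
    simp only [pow_zero, one_mul, Matrix.one_mul, Pauli_trace, if_neg hβ0, zero_div, mul_zero]
  have hf1 : ∀ β, ‖f 1 β‖ = a β := by
    intro β
    have htr : (H ^ 1 * Pauli n β).trace = (if β ∈ S then s β else 0) * 2 ^ n := by
      rw [pow_one, hH, Finset.sum_mul, Matrix.trace_sum]
      have h1 : ∀ α ∈ S, ((s α • Pauli n α) * Pauli n β).trace
          = if α = β then s α * 2 ^ n else 0 := by
        intro α _
        rw [Matrix.smul_mul, Matrix.trace_smul, trace_Pauli_mul, smul_eq_mul, mul_ite, mul_zero]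
      rw [Finset.sum_congr rfl h1, Finset.sum_ite_eq' S β (fun α => s α * 2 ^ n)]
      by_cases hβ : β ∈ S <;> simp [hβ]
    rw [hf, hadef]
    simp only []
    rw [htr, mul_div_assoc, div_self h2n, mul_one]
    by_cases hβ : β ∈ S <;>
      simp [hβ, norm_mul, habs_z, Nat.factorial_one, pow_one] <;> ring
  -- pointwise bound on |v β|
  have hvle : ∀ β ∈ X, ‖v β‖ ≤ a β + r β := by
    intro β hβ
    have hs := (hvsum β).summable
    have hdec : v β = f 0 β + (f 1 β + ∑' j : ℕ, f (j+2) β) := by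
      rw [← (hvsum β).tsum_eq, Summable.tsum_eq_zero_add hs,
        Summable.tsum_eq_zero_add ((summable_nat_add_iff 1).2 hs)]
    rw [hdec, hf0 β hβ, zero_add]
    refine (norm_add_le _ _).trans ?_
    have h1 : ‖∑' j : ℕ, f (j+2) β‖ ≤ r β := by
      have h2 := norm_tsum_le_tsum_norm (f := fun j : ℕ => f (j+2) β)
        (by simpa using hrsummable β)
      simpa [hrdef] using h2
    rw [hf1 β]
    exact add_le_add le_rfl h1
  -- final assembly
  have step1 : ∑ α ∈ X, Complex.normSq (v α) ≤ ∑ β ∈ X, (a β + r β) ^ 2 := by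
    refine Finset.sum_le_sum fun β hβ => ?_
    rw [Complex.normSq_eq_norm_sq]
    exact pow_le_pow_left₀ (norm_nonneg _) (hvle β hβ) 2
  have step2 : ∑ β ∈ X, (a β + r β) ^ 2
      ≤ ∑ β ∈ S ∩ X, (a β + R) ^ 2 + ((m:ℝ) - (S ∩ X).card) * R ^ 2 := by
    refine final_alg X (S ∩ X) Finset.inter_subset_right a r R m ?_ ?_ ?_ hR0 ?_ hXsum
    · intro β hβ
      rw [hadef]
      by_cases h : β ∈ S <;> simp [h] <;> positivity
    · exact fun β _ => hr0 β
    · exact fun β _ => hrR β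
    · intro β hβ hβS
      have : β ∉ S := fun hc => hβS (Finset.mem_inter.2 ⟨hc, hβ⟩)
      rw [hadef]
      simp [this]
  have step3 : ∑ β ∈ S ∩ X, (a β + R) ^ 2
      = ∑ α ∈ S ∩ X, (‖s α‖ * t + R) ^ 2 := by
    refine Finset.sum_congr rfl fun β hβ => ?_
    have hβS : β ∈ S := (Finset.mem_inter.1 hβ).1
    rw [hadef]
    simp [hβS]
  calc ∑ α ∈ X, Complex.normSq (v α) ≤ ∑ β ∈ X, (a β + r β) ^ 2 := step1
    _ ≤ ∑ β ∈ S ∩ X, (a β + R) ^ 2 + ((m:ℝ) - (S ∩ X).card) * R ^ 2 := step2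
    _ = ∑ α ∈ S ∩ X, (‖s α‖ * t + R) ^ 2 + ((m:ℝ) - (S ∩ X).card) * R ^ 2 := by
        rw [step3]
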